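/- Let n be a positive integer, let a₁,…,aₙ and b₁,…,bₙ be positive real numbers, and let μ > 0 be a real number. Define T = Σ_{k=1}^n aₖ/bₖ and, for m = 1, 2, 3, S^(m) = Σ_{k=1}^n Σ_{l=1}^n aₖaₗ/(bₖ+bₗ)^m. Then T² ≤ μ·S^(1) + 2·S^(2) + (2/μ)·S^(3). -/

import Mathlib

open Real Finset MeasureTheory

lemma aux_integrable_pow_exp (j : ℕ) {r : ℝ} (hr : 0 < r) :
    IntegrableOn (fun t : ℝ => t ^ j * Real.exp (-(r * t))) (Set.Ioi 0) := by
  have h := integrableOn_rpow_mul_exp_neg_mul_rpow (s := (j : ℝ)) (p := 1) (b := r)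
    (lt_of_lt_of_le (by norm_num) (Nat.cast_nonneg j)) one_pos hr
  refine h.congr_fun (fun x hx => ?_) measurableSet_Ioi
  dsimp only
  rw [Real.rpow_natCast, Real.rpow_one, neg_mul]

lemma aux_integral_pow_exp (j : ℕ) {r : ℝ} (hr : 0 < r) :
    ∫ t in Set.Ioi (0:ℝ), t ^ j * Real.exp (-(r * t)) = (j.factorial : ℝ) / r ^ (j + 1) := by
  have h := Real.integral_rpow_mul_exp_neg_mul_Ioi (a := (j : ℝ) + 1) (r := r)
    (by positivity) hr
  rw [show ((j:ℝ) + 1 - 1) = (j:ℝ) by ring, Real.Gamma_nat_eq_factorial,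
    show ((j:ℝ) + 1) = ((j+1 : ℕ) : ℝ) by push_cast; ring, Real.rpow_natCast] at h
  have h2 : ∫ t in Set.Ioi (0:ℝ), t ^ j * Real.exp (-(r * t))
      = ∫ t in Set.Ioi (0:ℝ), t ^ ((j:ℝ)) * Real.exp (-(r * t)) := by
    refine setIntegral_congr_fun measurableSet_Ioi (fun x hx => ?_)
    rw [Real.rpow_natCast]
  rw [h2, h, div_pow, one_pow]; ring

lemma aux_weight_deriv {μ : ℝ} (hμ : 0 < μ) :
    ∀ x ∈ Set.Ici (0:ℝ), HasDerivAt (fun t : ℝ => -μ * (μ + t)⁻¹) (μ / (μ + x)^2) x := by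
  intro x hx
  have hne : μ + x ≠ 0 := by have := Set.mem_Ici.mp hx; positivity
  have h1 : HasDerivAt (fun t : ℝ => μ + t) 1 x := (hasDerivAt_id x).const_add μ
  have h2 : HasDerivAt (fun t : ℝ => -μ * (μ + t)⁻¹) (-μ * (-1 / (μ + x) ^ 2)) x :=
    (h1.inv hne).const_mul (-μ)
  convert h2 using 1
  ring

lemma aux_weight_tendsto {μ : ℝ} (hμ : 0 < μ) :
    Filter.Tendsto (fun t : ℝ => -μ * (μ + t)⁻¹) Filter.atTop (nhds 0) := by
  have : Filter.Tendsto (fun t : ℝ => (μ + t)⁻¹) Filter.atTop (nhds 0) :=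
    Filter.Tendsto.inv_tendsto_atTop (Filter.tendsto_atTop_add_const_left _ μ Filter.tendsto_id)
  simpa using this.const_mul (-μ)

lemma aux_weight_integrable {μ : ℝ} (hμ : 0 < μ) :
    IntegrableOn (fun t : ℝ => μ / (μ + t)^2) (Set.Ioi 0) :=
  integrableOn_Ioi_deriv_of_nonneg' (aux_weight_deriv hμ)
    (fun x hx => by have := Set.mem_Ioi.mp hx; positivity) (aux_weight_tendsto hμ)

lemma aux_weight_integral {μ : ℝ} (hμ : 0 < μ) :
    ∫ t in Set.Ioi (0:ℝ), μ / (μ + t)^2 = 1 := by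
  rw [integral_Ioi_of_hasDerivAt_of_tendsto' (aux_weight_deriv hμ)
    (aux_weight_integrable hμ) (aux_weight_tendsto hμ)]
  field_simp
  ring

lemma aux_combo_integrable {s : ℝ} (hs : 0 < s) (c0 c1 c2 : ℝ) :
    IntegrableOn (fun t : ℝ => c0 * (t ^ 0 * Real.exp (-(s*t))) + c1 * (t ^ 1 * Real.exp (-(s*t)))
      + c2 * (t ^ 2 * Real.exp (-(s*t)))) (Set.Ioi 0) :=
  (((aux_integrable_pow_exp 0 hs).const_mul c0).add
    ((aux_integrable_pow_exp 1 hs).const_mul c1)).add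
    ((aux_integrable_pow_exp 2 hs).const_mul c2)

lemma aux_combo_integral {s : ℝ} (hs : 0 < s) (c0 c1 c2 : ℝ) :
    ∫ t in Set.Ioi (0:ℝ), (c0 * (t ^ 0 * Real.exp (-(s*t))) + c1 * (t ^ 1 * Real.exp (-(s*t)))
      + c2 * (t ^ 2 * Real.exp (-(s*t))))
    = c0 / s + c1 / s ^ 2 + c2 * 2 / s ^ 3 := by
  have h0 : IntegrableOn (fun t : ℝ => c0 * (t ^ 0 * Real.exp (-(s*t)))) (Set.Ioi 0) :=
    (aux_integrable_pow_exp 0 hs).const_mul c0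
  have h1 : IntegrableOn (fun t : ℝ => c1 * (t ^ 1 * Real.exp (-(s*t)))) (Set.Ioi 0) :=
    (aux_integrable_pow_exp 1 hs).const_mul c1
  have h2 : IntegrableOn (fun t : ℝ => c2 * (t ^ 2 * Real.exp (-(s*t)))) (Set.Ioi 0) :=
    (aux_integrable_pow_exp 2 hs).const_mul c2
  have h01 : IntegrableOn (fun t : ℝ => c0 * (t ^ 0 * Real.exp (-(s*t)))
      + c1 * (t ^ 1 * Real.exp (-(s*t)))) (Set.Ioi 0) := h0.add h1
  rw [integral_add h01 h2, integral_add h0 h1,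
    integral_const_mul, integral_const_mul, integral_const_mul,
    aux_integral_pow_exp 0 hs, aux_integral_pow_exp 1 hs, aux_integral_pow_exp 2 hs]
  norm_num [Nat.factorial]
  ring

theorem sum_sq_le_mu_S1_add_two_S2_add_two_div_mu_S3
    (n : ℕ) (hn : 0 < n) (a b : Fin n → ℝ)
    (ha : ∀ i, 0 < a i) (hb : ∀ i, 0 < b i)
    (μ : ℝ) (hμ : 0 < μ) :
    (∑ k, a k / b k) ^ 2 ≤
      μ * (∑ k, ∑ l, a k * a l / (b k + b l) ^ 1) +
      2 * (∑ k, ∑ l, a k * a l / (b k + b l) ^ 2) +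
      (2 / μ) * (∑ k, ∑ l, a k * a l / (b k + b l) ^ 3) := by
  have hμ' : Real.sqrt μ ^ 2 = μ := Real.sq_sqrt hμ.le
  have hsμ : 0 < Real.sqrt μ := Real.sqrt_pos.mpr hμ
  set f : ℝ → ℝ := fun t => ∑ k, a k * Real.exp (-(b k * t)) with hf
  set T : ℝ := ∑ k, a k / b k with hT
  set R : ℝ := μ * (∑ k, ∑ l, a k * a l / (b k + b l) ^ 1) +
      2 * (∑ k, ∑ l, a k * a l / (b k + b l) ^ 2) +
      (2 / μ) * (∑ k, ∑ l, a k * a l / (b k + b l) ^ 3) with hR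
  have hfnn : ∀ t : ℝ, 0 ≤ f t := fun t =>
    Finset.sum_nonneg fun k _ => mul_nonneg (ha k).le (Real.exp_pos _).le
  -- integrability and integral of f
  have hfint : IntegrableOn f (Set.Ioi 0) := by
    refine integrable_finset_sum _ fun k _ => ?_
    have := (aux_integrable_pow_exp 0 (hb k)).const_mul (a k)
    simpa using this
  have hfeq : ∫ t in Set.Ioi (0:ℝ), f t = T := by
    rw [hf, integral_finset_sum _ fun k _ => by
      simpa using (aux_integrable_pow_exp 0 (hb k)).const_mul (a k)]
    refine Finset.sum_congr rfl fun k _ => ?_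
    have e : (fun t : ℝ => a k * Real.exp (-(b k * t)))
        = fun t : ℝ => a k * (t ^ 0 * Real.exp (-(b k * t))) := by
      funext t; rw [pow_zero, one_mul]
    rw [e, integral_const_mul, aux_integral_pow_exp 0 (hb k)]
    simp [Nat.factorial, div_eq_mul_inv]
  -- the squared weighted function
  have hexp : ∀ (k l : Fin n) (t : ℝ), Real.exp (-((b k + b l) * t))
      = Real.exp (-(b k * t)) * Real.exp (-(b l * t)) := by
    intro k l t; rw [← Real.exp_add]; ring_nf
  have hg2 : (fun t : ℝ => (f t * (μ + t) / Real.sqrt μ) ^ 2)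
      = fun t : ℝ => ∑ k, ∑ l,
        ((a k * a l * μ) * (t ^ 0 * Real.exp (-((b k + b l) * t)))
          + (a k * a l * 2) * (t ^ 1 * Real.exp (-((b k + b l) * t)))
          + (a k * a l * (1/μ)) * (t ^ 2 * Real.exp (-((b k + b l) * t)))) := by
    funext t
    have h1 : (f t * (μ + t) / Real.sqrt μ) ^ 2 = (f t * f t) * ((μ + t) ^ 2 / μ) := by
      rw [div_pow, mul_pow, hμ']; ring
    rw [h1, hf, Finset.sum_mul_sum, Finset.sum_mul]
    refine Finset.sum_congr rfl fun k _ => ?_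
    rw [Finset.sum_mul]
    refine Finset.sum_congr rfl fun l _ => ?_
    rw [hexp k l t]
    field_simp
    ring
  have hcombo : ∀ k l : Fin n, IntegrableOn (fun t : ℝ =>
        ((a k * a l * μ) * (t ^ 0 * Real.exp (-((b k + b l) * t)))
          + (a k * a l * 2) * (t ^ 1 * Real.exp (-((b k + b l) * t)))
          + (a k * a l * (1/μ)) * (t ^ 2 * Real.exp (-((b k + b l) * t))))) (Set.Ioi 0) :=
    fun k l => aux_combo_integrable (by have := hb k; have := hb l; positivity) _ _ _
  have hg2int : IntegrableOn (fun t : ℝ => (f t * (μ + t) / Real.sqrt μ) ^ 2) (Set.Ioi 0) := by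
    rw [hg2]
    exact integrable_finset_sum _ fun k _ => integrable_finset_sum _ fun l _ => hcombo k l
  have hg2eq : ∫ t in Set.Ioi (0:ℝ), (f t * (μ + t) / Real.sqrt μ) ^ 2 = R := by
    rw [hg2, integral_finset_sum _ fun k _ => integrable_finset_sum _ fun l _ => hcombo k l]
    have : ∀ k : Fin n, ∫ t in Set.Ioi (0:ℝ), (∑ l,
        ((a k * a l * μ) * (t ^ 0 * Real.exp (-((b k + b l) * t)))
          + (a k * a l * 2) * (t ^ 1 * Real.exp (-((b k + b l) * t)))
          + (a k * a l * (1/μ)) * (t ^ 2 * Real.exp (-((b k + b l) * t)))))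
        = ∑ l, ((a k * a l * μ) / (b k + b l) + (a k * a l * 2) / (b k + b l) ^ 2
            + (a k * a l * (1/μ)) * 2 / (b k + b l) ^ 3) := by
      intro k
      rw [integral_finset_sum _ fun l _ => hcombo k l]
      exact Finset.sum_congr rfl fun l _ =>
        aux_combo_integral (by have := hb k; have := hb l; positivity) _ _ _
    rw [Finset.sum_congr rfl fun k _ => this k, hR]
    rw [Finset.mul_sum, Finset.mul_sum, Finset.mul_sum, ← Finset.sum_add_distrib,
      ← Finset.sum_add_distrib]
    refine Finset.sum_congr rfl fun k _ => ?_
    rw [Finset.mul_sum, Finset.mul_sum, Finset.mul_sum, ← Finset.sum_add_distrib,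
      ← Finset.sum_add_distrib]
    refine Finset.sum_congr rfl fun l _ => ?_
    have hbkl : (0:ℝ) < b k + b l := by have := hb k; have := hb l; positivity
    field_simp
  -- weight
  have hw2 : (fun t : ℝ => (Real.sqrt μ / (μ + t)) ^ 2) = fun t : ℝ => μ / (μ + t) ^ 2 := by
    funext t; rw [div_pow, hμ']
  have hwint : IntegrableOn (fun t : ℝ => (Real.sqrt μ / (μ + t)) ^ 2) (Set.Ioi 0) := by
    rw [hw2]; exact aux_weight_integrable hμ
  have hweq : ∫ t in Set.Ioi (0:ℝ), (Real.sqrt μ / (μ + t)) ^ 2 = 1 := by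
    rw [hw2]; exact aux_weight_integral hμ
  set ν := volume.restrict (Set.Ioi (0:ℝ)) with hν
  have hL1 : ∫⁻ t, ENNReal.ofReal (f t) ∂ν = ENNReal.ofReal T := by
    rw [← hfeq]
    exact (ofReal_integral_eq_lintegral_ofReal hfint
      (Filter.Eventually.of_forall fun t => hfnn t)).symm
  have hL2 : ∫⁻ t, ENNReal.ofReal ((f t * (μ + t) / Real.sqrt μ) ^ 2) ∂ν
      = ENNReal.ofReal R := by
    rw [← hg2eq]
    exact (ofReal_integral_eq_lintegral_ofReal hg2int
      (Filter.Eventually.of_forall fun t => sq_nonneg _)).symm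
  have hL3 : ∫⁻ t, ENNReal.ofReal ((Real.sqrt μ / (μ + t)) ^ 2) ∂ν = 1 := by
    rw [← ofReal_integral_eq_lintegral_ofReal hwint
      (Filter.Eventually.of_forall fun t => sq_nonneg _), hweq, ENNReal.ofReal_one]
  have hfc : Continuous f := by
    rw [hf]
    exact continuous_finset_sum _ fun k _ => continuous_const.mul (by fun_prop)
  have hm1 : AEMeasurable (fun t : ℝ => ENNReal.ofReal (f t * (μ + t) / Real.sqrt μ)) ν :=
    ((hfc.mul (continuous_const.add continuous_id)).div_const _).measurable.ennreal_ofReal.aemeasurable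
  have hm2 : AEMeasurable (fun t : ℝ => ENNReal.ofReal (Real.sqrt μ / (μ + t))) ν :=
    (measurable_const.div ((continuous_const.add continuous_id).measurable)).ennreal_ofReal.aemeasurable
  have hpq : Real.HolderConjugate 2 2 := Real.HolderConjugate.two_two
  have hold := ENNReal.lintegral_mul_le_Lp_mul_Lq ν hpq hm1 hm2
  have hgnn : ∀ t : ℝ, 0 < t → 0 ≤ f t * (μ + t) / Real.sqrt μ := fun t ht =>
    div_nonneg (mul_nonneg (hfnn t) (by linarith)) hsμ.le
  have hleft : ∫⁻ t, ((fun t : ℝ => ENNReal.ofReal (f t * (μ + t) / Real.sqrt μ))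
      * fun t : ℝ => ENNReal.ofReal (Real.sqrt μ / (μ + t))) t ∂ν = ENNReal.ofReal T := by
    rw [← hL1]
    refine lintegral_congr_ae ((ae_restrict_iff' measurableSet_Ioi).mpr
      (Filter.Eventually.of_forall fun t ht => ?_))
    have ht' : (0:ℝ) < t := ht
    have h1 : μ + t ≠ 0 := by positivity
    have h2 : Real.sqrt μ ≠ 0 := hsμ.ne'
    simp only [Pi.mul_apply]
    rw [← ENNReal.ofReal_mul (hgnn t ht')]
    congr 1
    field_simp
  have hright1 : ∫⁻ t, (ENNReal.ofReal (f t * (μ + t) / Real.sqrt μ)) ^ (2:ℝ) ∂ν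
      = ENNReal.ofReal R := by
    rw [← hL2]
    refine lintegral_congr_ae ((ae_restrict_iff' measurableSet_Ioi).mpr
      (Filter.Eventually.of_forall fun t ht => ?_))
    dsimp only
    rw [ENNReal.ofReal_rpow_of_nonneg (hgnn t ht) (by norm_num : (0:ℝ) ≤ 2),
      show (2:ℝ) = ((2:ℕ):ℝ) by norm_num, Real.rpow_natCast]
  have hright2 : ∫⁻ t, (ENNReal.ofReal (Real.sqrt μ / (μ + t))) ^ (2:ℝ) ∂ν = 1 := by
    rw [← hL3]
    refine lintegral_congr_ae ((ae_restrict_iff' measurableSet_Ioi).mpr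
      (Filter.Eventually.of_forall fun t ht => ?_))
    have ht' : (0:ℝ) < t := ht
    have hwnn : 0 ≤ Real.sqrt μ / (μ + t) := div_nonneg hsμ.le (by linarith)
    dsimp only
    rw [ENNReal.ofReal_rpow_of_nonneg hwnn (by norm_num : (0:ℝ) ≤ 2),
      show (2:ℝ) = ((2:ℕ):ℝ) by norm_num, Real.rpow_natCast]
  rw [hleft, hright1, hright2, ENNReal.one_rpow, mul_one] at hold
  have hTnn : 0 ≤ T := Finset.sum_nonneg fun k _ => div_nonneg (ha k).le (hb k).le
  have hRnn : 0 ≤ R := by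
    have s1 : ∀ m : ℕ, 0 ≤ ∑ k, ∑ l, a k * a l / (b k + b l) ^ m := fun m =>
      Finset.sum_nonneg fun k _ => Finset.sum_nonneg fun l _ => by
        have := hb k; have := hb l; have := ha k; have := ha l; positivity
    rw [hR]
    have h1 := s1 1; have h2 := s1 2; have h3 := s1 3
    have h4 : (0:ℝ) ≤ 2 / μ := by positivity
    exact add_nonneg (add_nonneg (mul_nonneg hμ.le h1)
      (mul_nonneg (by norm_num) h2)) (mul_nonneg h4 h3)
  have hfin : ENNReal.ofReal (T ^ 2) ≤ ENNReal.ofReal R := by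
    have h2 := ENNReal.rpow_le_rpow hold (by norm_num : (0:ℝ) ≤ 2)
    rw [← ENNReal.rpow_mul, show (1/2 : ℝ) * 2 = 1 by norm_num, ENNReal.rpow_one] at h2
    calc ENNReal.ofReal (T ^ 2) = (ENNReal.ofReal T) ^ (2:ℝ) := by
          rw [ENNReal.ofReal_rpow_of_nonneg hTnn (by norm_num : (0:ℝ) ≤ 2),
            show (2:ℝ) = ((2:ℕ):ℝ) by norm_num, Real.rpow_natCast]
      _ ≤ _ := h2
  exact (ENNReal.ofReal_le_ofReal_iff hRnn).mp hfin
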